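/- Let b ∈ G with g_b = K for some K > 0. Then there exists b′ ∈ G with g_{b′} = K − 1 such that some b̄ ∈ R(b′) has the same type function as b, i.e., φ_{b̄} = φ_b. -/

import Mathlib

open Finset

open Finset

/-- The partial sum `Σ_{k=0}^{i-1} a_{k j}` as an integer. -/
def psum (a : ℕ → ℕ → ℕ) (i j : ℕ) : ℤ := ∑ k ∈ Finset.range i, (a k j : ℤ)

/-- `b ∈ B`, i.e. `0 ≤ b_j < Σ_{i=0}^{n} a_{ij}` for all `j`. -/
def memB (n : ℕ) (a : ℕ → ℕ → ℕ) (b : ℕ → ℤ) : Prop :=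
  ∀ j < n, 0 ≤ b j ∧ b j < psum a (n + 1) j

/-- `φ` is the type function of `b`:
`Σ_{k=0}^{φ(j)-1} a_{kj} ≤ b_j < Σ_{k=0}^{φ(j)} a_{kj}` for all `j < n`. -/
def IsTypeFun (n : ℕ) (a : ℕ → ℕ → ℕ) (b : ℕ → ℤ) (φ : ℕ → ℕ) : Prop :=
  ∀ j < n, φ j ≤ n ∧ psum a (φ j) j ≤ b j ∧ b j < psum a (φ j + 1) j

/-- The type vector `t_{b,i} = #{j : φ_b(j) = i}`. -/
def typeVec (n : ℕ) (φ : ℕ → ℕ) (i : ℕ) : ℕ :=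
  ((Finset.range n).filter fun j => φ j = i).card

/-- `ib` is the row content of a point with type function `φ`:
the largest `i ∈ {0,…,n}` with `t_{b,i} = 0`. -/
def IsRowContent (n : ℕ) (φ : ℕ → ℕ) (ib : ℕ) : Prop :=
  ib ≤ n ∧ typeVec n φ ib = 0 ∧ ∀ i ≤ n, typeVec n φ i = 0 → i ≤ ib

/-- The vector `a(b)`: `a(b)_j = 0` if `φ_b(j) < i(b)` and `a(b)_j = a_{i(b) j}` otherwise. -/
def ashift (a : ℕ → ℕ → ℕ) (φ : ℕ → ℕ) (ib j : ℕ) : ℤ :=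
  if φ j < ib then 0 else (a ib j : ℤ)

/-- `b' ∈ R(b) = {b - a(b) + c : c ∈ A_{i(b)}}`. -/
def memR (n : ℕ) (a : ℕ → ℕ → ℕ) (b : ℕ → ℤ) (φ : ℕ → ℕ) (ib : ℕ) (b' : ℕ → ℤ) : Prop :=
  ∀ j < n, b j - ashift a φ ib j ≤ b' j ∧ b' j ≤ b j - ashift a φ ib j + (a ib j : ℤ)

/-- The greedy condition: `Σ_{i=0}^{I} t_{b,i} ≤ I + 1` for all `I < n`. -/
def memG (n : ℕ) (φ : ℕ → ℕ) : Prop :=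
  ∀ I < n, ∑ i ∈ Finset.range (I + 1), typeVec n φ i ≤ I + 1

/-- A point is mixed if `t_{b,i} ≤ 1` for all `i ∈ {0,…,n}`. -/
def Mixed (n : ℕ) (φ : ℕ → ℕ) : Prop := ∀ i ≤ n, typeVec n φ i ≤ 1

/-- `Ib = I_b`: for non-mixed `b` the largest `i` with `t_{b,i} ≥ 2`; for mixed `b`, `0`. -/
def IsIb (n : ℕ) (φ : ℕ → ℕ) (Ib : ℕ) : Prop :=
  (2 ≤ typeVec n φ Ib ∧ ∀ i, 2 ≤ typeVec n φ i → i ≤ Ib) ∨ (Mixed n φ ∧ Ib = 0)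

/-- `g_b = #{i < I_b : t_{b,i} = 0}`. -/
def gval (n : ℕ) (φ : ℕ → ℕ) (Ib : ℕ) : ℕ :=
  ((Finset.range Ib).filter fun i => typeVec n φ i = 0).card

lemma psum_succ (a : ℕ → ℕ → ℕ) (i j : ℕ) : psum a (i+1) j = psum a i j + a i j :=
  Finset.sum_range_succ _ _

lemma psum_nonneg (a : ℕ → ℕ → ℕ) (i j : ℕ) : 0 ≤ psum a i j :=
  Finset.sum_nonneg fun k _ => Int.ofNat_nonneg _

lemma psum_mono (a : ℕ → ℕ → ℕ) {i i' : ℕ} (j : ℕ) (h : i ≤ i') :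
    psum a i j ≤ psum a i' j :=
  Finset.sum_le_sum_of_subset_of_nonneg (Finset.range_subset_range.2 h)
    (fun k _ _ => Int.ofNat_nonneg _)

lemma one_le_a {n : ℕ} {a : ℕ → ℕ → ℕ} (hpos : ∀ i ≤ n, ∀ j < n, 0 < a i j)
    {i j : ℕ} (hi : i ≤ n) (hj : j < n) : (1 : ℤ) ≤ (a i j : ℤ) := by
  exact_mod_cast hpos i hi j hj

lemma psum_succ_le {n : ℕ} {a : ℕ → ℕ → ℕ} (hpos : ∀ i ≤ n, ∀ j < n, 0 < a i j)
    {i j : ℕ} (hi : i ≤ n) (hj : j < n) : psum a i j + 1 ≤ psum a (i+1) j := by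
  rw [psum_succ]
  have := one_le_a hpos hi hj
  omega

lemma psum_lt_total {n : ℕ} {a : ℕ → ℕ → ℕ} (hpos : ∀ i ≤ n, ∀ j < n, 0 < a i j)
    {i j : ℕ} (hi : i ≤ n) (hj : j < n) : psum a i j < psum a (n+1) j := by
  have h1 := psum_succ_le hpos hi hj
  have h2 := psum_mono a (i := i+1) (i' := n+1) j (by omega)
  omega

/-- Realization: given a set of "moved" coordinates (each decremented by one row),
build `b'`, `φ'` and the reach witness `bbar` of type `φ`. -/
lemma realize (n : ℕ) (a : ℕ → ℕ → ℕ) (hpos : ∀ i ≤ n, ∀ j < n, 0 < a i j)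
    (φ : ℕ → ℕ) (hφn : ∀ j < n, φ j ≤ n)
    (moved : ℕ → Bool) (ib' : ℕ) (hibn : ib' ≤ n)
    (hmv : ∀ j < n, moved j = true → 1 ≤ φ j ∧ φ j ≤ ib') :
    memB n a (fun j => psum a (φ j) j - (if moved j then 1 else 0)) ∧
    IsTypeFun n a (fun j => psum a (φ j) j - (if moved j then 1 else 0))
      (fun j => if moved j then φ j - 1 else φ j) ∧
    memR n a (fun j => psum a (φ j) j - (if moved j then 1 else 0))
      (fun j => if moved j then φ j - 1 else φ j) ib' (fun j => psum a (φ j) j) ∧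
    IsTypeFun n a (fun j => psum a (φ j) j) φ := by
  have key : ∀ j < n, psum a (φ j) j + 1 ≤ psum a (φ j + 1) j :=
    fun j hj => psum_succ_le hpos (hφn j hj) hj
  have keyib : ∀ j < n, (1:ℤ) ≤ (a ib' j : ℤ) := fun j hj => one_le_a hpos hibn hj
  refine ⟨?_, ?_, ?_, ?_⟩
  · -- memB
    intro j hj
    have h1 := psum_lt_total hpos (hφn j hj) hj
    by_cases hm : moved j = true
    · simp only [hm, if_true]
      have h2 : 1 ≤ φ j := (hmv j hj hm).1
      have h3 : psum a (φ j - 1) j + 1 ≤ psum a (φ j) j := by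
        have := psum_succ_le hpos (i := φ j - 1) (j := j) (by have := hφn j hj; omega) hj
        rwa [Nat.sub_add_cancel h2] at this
      have h4 := psum_nonneg a (φ j - 1) j
      constructor <;> omega
    · rw [Bool.not_eq_true] at hm
      simp only [hm, Bool.false_eq_true, if_false]
      refine ⟨by have := psum_nonneg a (φ j) j; omega, by omega⟩
  · -- IsTypeFun b' φ'
    intro j hj
    have hn' := hφn j hj
    by_cases hm : moved j = true
    · simp only [hm, if_true]
      have h2 : 1 ≤ φ j := (hmv j hj hm).1
      have h3 : psum a (φ j - 1) j + 1 ≤ psum a (φ j) j := by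
        have := psum_succ_le hpos (i := φ j - 1) (j := j) (by omega) hj
        rwa [Nat.sub_add_cancel h2] at this
      have h4 : φ j - 1 + 1 = φ j := Nat.sub_add_cancel h2
      refine ⟨by omega, by omega, ?_⟩
      rw [h4]
      omega
    · rw [Bool.not_eq_true] at hm
      simp only [hm, Bool.false_eq_true, if_false]
      refine ⟨hn', by omega, by have := key j hj; omega⟩
  · -- memR
    intro j hj
    have ha := keyib j hj
    by_cases hm : moved j = true
    · have h2 := hmv j hj hm
      have hlt : (if moved j then φ j - 1 else φ j) < ib' := by
        simp only [hm, if_true]; omega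
      simp only [ashift, hlt, if_true, hm]
      constructor <;> omega
    · rw [Bool.not_eq_true] at hm
      simp only [ashift, hm, Bool.false_eq_true, if_false]
      by_cases hlt : φ j < ib'
      · rw [if_pos hlt]; constructor <;> omega
      · rw [if_neg hlt]
        have := psum_nonneg a (φ j) j
        constructor <;> omega
  · -- IsTypeFun bbar φ
    intro j hj
    show φ j ≤ n ∧ psum a (φ j) j ≤ psum a (φ j) j ∧ psum a (φ j) j < psum a (φ j + 1) j
    exact ⟨hφn j hj, le_refl _, by have := key j hj; omega⟩

lemma typeVec_zero_iff {n : ℕ} {φ : ℕ → ℕ} {i : ℕ} :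
    typeVec n φ i = 0 ↔ ∀ j < n, φ j ≠ i := by
  unfold typeVec
  rw [Finset.card_eq_zero, Finset.filter_eq_empty_iff]
  constructor
  · intro h j hj; exact h (Finset.mem_range.2 hj)
  · intro h j hj; exact h j (Finset.mem_range.1 hj)

lemma typeVec_congr {n : ℕ} {φ ψ : ℕ → ℕ} {i k : ℕ}
    (h : ∀ j < n, φ j = i ↔ ψ j = k) : typeVec n φ i = typeVec n ψ k := by
  unfold typeVec
  congr 1
  ext j
  simp only [Finset.mem_filter, Finset.mem_range]
  exact and_congr_right fun hj => h j hj

lemma typeVec_eq_zero_of_gt {n : ℕ} {φ : ℕ → ℕ} (hφn : ∀ j < n, φ j ≤ n)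
    {i : ℕ} (hi : n < i) : typeVec n φ i = 0 := by
  rw [typeVec_zero_iff]
  intro j hj h
  exact absurd (h ▸ hφn j hj) (not_le.2 hi)

lemma sum_Ico_shift (f : ℕ → ℕ) (a b : ℕ) :
    ∑ i ∈ Finset.Ico a b, f (i+1) = ∑ i ∈ Finset.Ico (a+1) (b+1), f i := by
  rw [Finset.sum_Ico_eq_sum_range, Finset.sum_Ico_eq_sum_range]
  rw [Nat.succ_sub_succ]
  exact Finset.sum_congr rfl (fun i _ => by rw [show a + i + 1 = a + 1 + i by omega])

lemma sum_range_split (f : ℕ → ℕ) {k J : ℕ} (h : k ≤ J) :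
    ∑ i ∈ Finset.range J, f i = ∑ i ∈ Finset.range k, f i + ∑ i ∈ Finset.Ico k J, f i := by
  rw [Finset.range_eq_Ico, Finset.range_eq_Ico]
  exact (Finset.sum_Ico_consecutive f (Nat.zero_le k) h).symm

lemma sum_typeVec {n : ℕ} {φ : ℕ → ℕ} (hφn : ∀ j < n, φ j ≤ n) :
    ∑ i ∈ Finset.range (n+1), typeVec n φ i = n := by
  have := Finset.card_eq_sum_card_fiberwise (s := Finset.range n)
    (t := Finset.range (n+1)) (f := φ)
    (fun j hj => Finset.mem_range.2 (Nat.lt_succ_of_le (hφn j (Finset.mem_range.1 hj))))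
  simpa [typeVec, Finset.card_range] using this.symm

lemma moveB_works (n : ℕ) (a : ℕ → ℕ → ℕ) (hpos : ∀ i ≤ n, ∀ j < n, 0 < a i j)
    (φ : ℕ → ℕ) (hφn : ∀ j < n, φ j ≤ n)
    (istar Ib ib' K : ℕ)
    (h1 : istar < Ib) (hIbn : Ib ≤ n)
    (h0 : typeVec n φ istar = 0)
    (h2 : 2 ≤ typeVec n φ Ib)
    (hmid : ∀ i, istar < i → i < Ib → 1 ≤ typeVec n φ i)
    (habove : ∀ i, Ib < i → typeVec n φ i ≤ 1)
    (hG : memG n φ)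
    (hSm : ∀ J, istar < J → J ≤ Ib → J ≤ n → ∑ i ∈ Finset.range (J+1), typeVec n φ i ≤ J)
    (hib1 : Ib ≤ ib') (hibn : ib' ≤ n)
    (hibz : ib' = Ib ∨ typeVec n φ ib' = 0)
    (hibmax : ∀ i ≤ n, typeVec n φ i = 0 → i ≠ istar → i ≤ ib')
    (hKcard : ((Finset.range istar).filter fun i => typeVec n φ i = 0).card = K - 1) :
    ∃ (b' : ℕ → ℤ) (φ' : ℕ → ℕ) (ib'' Ib' : ℕ),
      memB n a b' ∧ IsTypeFun n a b' φ' ∧ memG n φ' ∧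
      IsRowContent n φ' ib'' ∧ IsIb n φ' Ib' ∧ gval n φ' Ib' = K - 1 ∧
      ∃ bbar : ℕ → ℤ, memR n a b' φ' ib'' bbar ∧ IsTypeFun n a bbar φ := by
  set moved : ℕ → Bool := fun j => decide (istar < φ j ∧ φ j ≤ Ib) with hmoved
  have mvd : ∀ j, moved j = true ↔ (istar < φ j ∧ φ j ≤ Ib) := by
    intro j; simp [hmoved]
  set φ' : ℕ → ℕ := fun j => if moved j then φ j - 1 else φ j with hφ'
  have hφ'j : ∀ j, (istar < φ j ∧ φ j ≤ Ib) → φ' j = φ j - 1 := by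
    intro j hj; simp only [hφ', if_pos ((mvd j).2 hj)]
  have hφ'j2 : ∀ j, ¬(istar < φ j ∧ φ j ≤ Ib) → φ' j = φ j := by
    intro j hj
    simp only [hφ']
    rw [if_neg]
    rw [mvd j]; exact hj
  have φ'n : ∀ j < n, φ' j ≤ n := by
    intro j hj
    by_cases hc : istar < φ j ∧ φ j ≤ Ib
    · rw [hφ'j j hc]; have := hφn j hj; omega
    · rw [hφ'j2 j hc]; exact hφn j hj
  have hno_star : ∀ j < n, φ j ≠ istar := typeVec_zero_iff.1 h0
  -- typeVec computations
  have F1 : ∀ i, (i < istar ∨ Ib < i) → typeVec n φ' i = typeVec n φ i := by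
    intro i hi
    apply typeVec_congr
    intro j hj
    constructor
    · intro h
      by_cases hc : istar < φ j ∧ φ j ≤ Ib
      · rw [hφ'j j hc] at h; omega
      · rwa [hφ'j2 j hc] at h
    · intro h
      have hc : ¬(istar < φ j ∧ φ j ≤ Ib) := by omega
      rw [hφ'j2 j hc]; exact h
  have F2 : ∀ i, istar ≤ i → i < Ib → typeVec n φ' i = typeVec n φ (i+1) := by
    intro i hi1 hi2
    apply typeVec_congr
    intro j hj
    constructor
    · intro h
      by_cases hc : istar < φ j ∧ φ j ≤ Ib
      · rw [hφ'j j hc] at h; omega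
      · rw [hφ'j2 j hc] at h
        exfalso
        have := hno_star j hj
        omega
    · intro h
      have hc : istar < φ j ∧ φ j ≤ Ib := by omega
      rw [hφ'j j hc]; omega
  have F3 : typeVec n φ' Ib = 0 := by
    rw [typeVec_zero_iff]
    intro j hj h
    by_cases hc : istar < φ j ∧ φ j ≤ Ib
    · rw [hφ'j j hc] at h; omega
    · rw [hφ'j2 j hc] at h; omega
  -- memG
  have hmemG : memG n φ' := by
    intro I hI
    set J := I + 1 with hJ
    have hJn : J ≤ n := hI
    rcases le_or_gt J istar with hc | hc
    · have : ∑ i ∈ Finset.range J, typeVec n φ' i = ∑ i ∈ Finset.range J, typeVec n φ i :=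
        Finset.sum_congr rfl (fun i hi => F1 i (Or.inl (by
          have := Finset.mem_range.1 hi; omega)))
      rw [this]; exact hG I hI
    · rcases le_or_gt J Ib with hc2 | hc2
      · -- istar < J ≤ Ib
        have e1 : ∑ i ∈ Finset.range J, typeVec n φ' i
            = ∑ i ∈ Finset.range istar, typeVec n φ i
              + ∑ i ∈ Finset.Ico (istar+1) (J+1), typeVec n φ i := by
          rw [sum_range_split _ (le_of_lt hc)]
          congr 1
          · exact Finset.sum_congr rfl (fun i hi => F1 i (Or.inl (Finset.mem_range.1 hi)))
          · rw [← sum_Ico_shift]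
            exact Finset.sum_congr rfl (fun i hi => by
              have := Finset.mem_Ico.1 hi
              exact F2 i this.1 (by omega))
        have e2 : ∑ i ∈ Finset.range (J+1), typeVec n φ i
            = ∑ i ∈ Finset.range istar, typeVec n φ i
              + ∑ i ∈ Finset.Ico (istar+1) (J+1), typeVec n φ i := by
          rw [sum_range_split _ (show istar + 1 ≤ J + 1 by omega), Finset.sum_range_succ, h0]
          omega
        rw [e1, ← e2]
        exact hSm J hc hc2 hJn
      · -- Ib < J
        have e1 : ∑ i ∈ Finset.range J, typeVec n φ' i = ∑ i ∈ Finset.range J, typeVec n φ i := by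
          rw [sum_range_split (fun i => typeVec n φ' i) (show Ib + 1 ≤ J by omega),
              sum_range_split (fun i => typeVec n φ i) (show Ib + 1 ≤ J by omega)]
          have g1 : ∑ i ∈ Finset.range istar, typeVec n φ' i
              = ∑ i ∈ Finset.range istar, typeVec n φ i :=
            Finset.sum_congr rfl (fun i hi => F1 i (Or.inl (Finset.mem_range.1 hi)))
          have g2 : ∑ i ∈ Finset.Ico istar Ib, typeVec n φ' i
              = ∑ i ∈ Finset.Ico (istar+1) (Ib+1), typeVec n φ i := by
            rw [← sum_Ico_shift]
            exact Finset.sum_congr rfl (fun i hi => by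
              have := Finset.mem_Ico.1 hi
              exact F2 i this.1 this.2)
          have gtail : ∑ i ∈ Finset.Ico (Ib+1) J, typeVec n φ' i
              = ∑ i ∈ Finset.Ico (Ib+1) J, typeVec n φ i :=
            Finset.sum_congr rfl (fun i hi => F1 i (Or.inr (Finset.mem_Ico.1 hi).1))
          have L : ∑ i ∈ Finset.range (Ib+1), typeVec n φ' i
              = ∑ i ∈ Finset.range istar, typeVec n φ i
                + ∑ i ∈ Finset.Ico (istar+1) (Ib+1), typeVec n φ i := by
            rw [Finset.sum_range_succ, F3,
                sum_range_split (fun i => typeVec n φ' i) (le_of_lt h1), g1, g2]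
            omega
          have R : ∑ i ∈ Finset.range (Ib+1), typeVec n φ i
              = ∑ i ∈ Finset.range istar, typeVec n φ i
                + ∑ i ∈ Finset.Ico (istar+1) (Ib+1), typeVec n φ i := by
            rw [sum_range_split (fun i => typeVec n φ i) (show istar + 1 ≤ Ib + 1 by omega),
                Finset.sum_range_succ, h0]
            omega
          omega
        rw [e1]; exact hG I hI
  -- IsRowContent
  have hrc : IsRowContent n φ' ib' := by
    refine ⟨hibn, ?_, ?_⟩
    · rcases hibz with h | h
      · rw [h]; exact F3
      · rcases eq_or_lt_of_le hib1 with he | he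
        · rw [← he]; exact F3
        · rw [F1 ib' (Or.inr he)]; exact h
    · intro i hi hz
      by_contra hgt
      push_neg at hgt
      have hIbi : Ib < i := by omega
      rw [F1 i (Or.inr hIbi)] at hz
      exact absurd (hibmax i hi hz (by omega)) (by omega)
  -- IsIb
  have hIb' : IsIb n φ' (Ib - 1) := by
    left
    constructor
    · rw [F2 (Ib-1) (by omega) (by omega), show Ib - 1 + 1 = Ib by omega]
      exact h2
    · intro i hi2
      by_contra hgt
      push_neg at hgt
      have hIbi : Ib ≤ i := by omega
      rcases eq_or_lt_of_le hIbi with he | he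
      · rw [← he, F3] at hi2; omega
      · rcases le_or_gt i n with hin | hin
        · rw [F1 i (Or.inr he)] at hi2
          exact absurd (habove i he) (by omega)
        · rw [typeVec_eq_zero_of_gt φ'n hin] at hi2; omega
  -- gval
  have hgval : gval n φ' (Ib - 1) = K - 1 := by
    unfold gval
    rw [show ((Finset.range (Ib-1)).filter fun i => typeVec n φ' i = 0)
        = ((Finset.range istar).filter fun i => typeVec n φ i = 0) from ?_]
    · exact hKcard
    · ext i
      simp only [Finset.mem_filter, Finset.mem_range]
      constructor
      · rintro ⟨hi, hz⟩
        rcases lt_or_ge i istar with hlt | hge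
        · rw [F1 i (Or.inl hlt)] at hz; exact ⟨hlt, hz⟩
        · exfalso
          rw [F2 i hge (by omega)] at hz
          exact absurd (hmid (i+1) (by omega) (by omega)) (by omega)
      · rintro ⟨hi, hz⟩
        rw [F1 i (Or.inl hi)]
        exact ⟨by omega, hz⟩
  -- assemble
  obtain ⟨hB, hT, hR, hTb⟩ := realize n a hpos φ hφn moved ib' hibn
    (fun j _ hm => by
      have := (mvd j).1 hm
      exact ⟨by omega, by omega⟩)
  exact ⟨_, φ', ib', Ib - 1, hB, hT, hmemG, hrc, hIb', hgval, _, hR, hTb⟩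

lemma moveA_works (n : ℕ) (a : ℕ → ℕ → ℕ) (hpos : ∀ i ≤ n, ∀ j < n, 0 < a i j)
    (φ : ℕ → ℕ) (hφn : ∀ j < n, φ j ≤ n)
    (istar m Ib ib' K : ℕ)
    (h1 : istar < m) (hmIb : m ≤ Ib) (hIbn : Ib ≤ n)
    (h0 : typeVec n φ istar = 0)
    (hm2 : 2 ≤ typeVec n φ m) (h2Ib : 2 ≤ typeVec n φ Ib)
    (hmid1 : ∀ i, istar < i → i < m → typeVec n φ i = 1)
    (hmidIb : ∀ i, istar < i → i < Ib → 1 ≤ typeVec n φ i)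
    (hIbmax : ∀ i, 2 ≤ typeVec n φ i → i ≤ Ib)
    (hG : memG n φ)
    (hib : Ib < ib') (hibn : ib' ≤ n) (hibz : typeVec n φ ib' = 0)
    (hibmax : ∀ i ≤ n, typeVec n φ i = 0 → i ≠ istar → i ≤ ib')
    (hKcard : ((Finset.range istar).filter fun i => typeVec n φ i = 0).card = K - 1)
    (hA2 : m = Ib → typeVec n φ m = 2 →
      ∀ w, w < istar → typeVec n φ w = 0 → ∃ i, w < i ∧ i < istar ∧ 2 ≤ typeVec n φ i) :
    ∃ (b' : ℕ → ℤ) (φ' : ℕ → ℕ) (ib'' Ib' : ℕ),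
      memB n a b' ∧ IsTypeFun n a b' φ' ∧ memG n φ' ∧
      IsRowContent n φ' ib'' ∧ IsIb n φ' Ib' ∧ gval n φ' Ib' = K - 1 ∧
      ∃ bbar : ℕ → ℤ, memR n a b' φ' ib'' bbar ∧ IsTypeFun n a bbar φ := by
  classical
  set jmin : ℕ → ℕ := fun i => sInf {j | j < n ∧ φ j = i} with hjmin
  have hjm : ∀ i, 1 ≤ typeVec n φ i → (jmin i < n ∧ φ (jmin i) = i) := by
    intro i hi
    have hne : {j | j < n ∧ φ j = i}.Nonempty := by
      obtain ⟨j, hj⟩ := Finset.card_pos.1 (lt_of_lt_of_le Nat.zero_lt_one hi)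
      obtain ⟨hj1, hj2⟩ := Finset.mem_filter.1 hj
      exact ⟨j, Finset.mem_range.1 hj1, hj2⟩
    exact Nat.sInf_mem hne
  have uniq : ∀ i, typeVec n φ i = 1 → ∀ j < n, φ j = i → j = jmin i := by
    intro i hi j hj hji
    obtain ⟨x, hx⟩ := Finset.card_eq_one.1 hi
    have hmem : jmin i ∈ (Finset.range n).filter fun j => φ j = i := by
      obtain ⟨u, v⟩ := hjm i (by omega)
      exact Finset.mem_filter.2 ⟨Finset.mem_range.2 u, v⟩
    have hjmem : j ∈ (Finset.range n).filter fun k => φ k = i :=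
      Finset.mem_filter.2 ⟨Finset.mem_range.2 hj, hji⟩
    rw [hx, Finset.mem_singleton] at hmem hjmem
    rw [hjmem, hmem]
  set moved : ℕ → Bool := fun j => decide (istar < φ j ∧ φ j ≤ m ∧ j = jmin (φ j)) with hmoved
  have mvd : ∀ j, moved j = true ↔ (istar < φ j ∧ φ j ≤ m ∧ j = jmin (φ j)) := by
    intro j; simp [hmoved]
  set φ' : ℕ → ℕ := fun j => if moved j then φ j - 1 else φ j with hφ'
  have hφ'j : ∀ j, (istar < φ j ∧ φ j ≤ m ∧ j = jmin (φ j)) → φ' j = φ j - 1 := by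
    intro j hj; simp only [hφ', if_pos ((mvd j).2 hj)]
  have hφ'j2 : ∀ j, ¬(istar < φ j ∧ φ j ≤ m ∧ j = jmin (φ j)) → φ' j = φ j := by
    intro j hj
    simp only [hφ']
    rw [if_neg]
    rw [mvd j]; exact hj
  have φ'n : ∀ j < n, φ' j ≤ n := by
    intro j hj
    by_cases hc : istar < φ j ∧ φ j ≤ m ∧ j = jmin (φ j)
    · rw [hφ'j j hc]; have := hφn j hj; omega
    · rw [hφ'j2 j hc]; exact hφn j hj
  have hno_star : ∀ j < n, φ j ≠ istar := typeVec_zero_iff.1 h0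
  -- typeVec computations
  have G1 : ∀ i, (i < istar ∨ m < i) → typeVec n φ' i = typeVec n φ i := by
    intro i hi
    apply typeVec_congr
    intro j hj
    constructor
    · intro h
      by_cases hc : istar < φ j ∧ φ j ≤ m ∧ j = jmin (φ j)
      · rw [hφ'j j hc] at h; omega
      · rwa [hφ'j2 j hc] at h
    · intro h
      have hc : ¬(istar < φ j ∧ φ j ≤ m ∧ j = jmin (φ j)) := by
        rintro ⟨u, v, -⟩; omega
      rw [hφ'j2 j hc]; exact h
  have singl : ∀ i, istar ≤ i → i < m →
      (Finset.range n).filter (fun j => φ' j = i) = {jmin (i+1)} := by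
    intro i hi1 hi2
    have hpos1 : 1 ≤ typeVec n φ (i+1) := by
      rcases eq_or_lt_of_le (show i + 1 ≤ m by omega) with he | hlt
      · rw [he]; omega
      · rw [hmid1 (i+1) (by omega) hlt]
    obtain ⟨hjn, hjφ⟩ := hjm (i+1) hpos1
    rw [Finset.eq_singleton_iff_unique_mem]
    constructor
    · refine Finset.mem_filter.2 ⟨Finset.mem_range.2 hjn, ?_⟩
      have hcond : istar < φ (jmin (i+1)) ∧ φ (jmin (i+1)) ≤ m
          ∧ jmin (i+1) = jmin (φ (jmin (i+1))) := by
        rw [hjφ]; exact ⟨by omega, by omega, rfl⟩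
      rw [hφ'j _ hcond, hjφ]
      omega
    · intro j hjmem
      obtain ⟨hjr, hjeq⟩ := Finset.mem_filter.1 hjmem
      have hjn' := Finset.mem_range.1 hjr
      by_cases hc : istar < φ j ∧ φ j ≤ m ∧ j = jmin (φ j)
      · rw [hφ'j j hc] at hjeq
        have : φ j = i + 1 := by omega
        rw [hc.2.2, this]
      · rw [hφ'j2 j hc] at hjeq
        exfalso
        rcases eq_or_lt_of_le hi1 with he | hlt
        · exact hno_star j hjn' (by omega)
        · have h1i : typeVec n φ i = 1 := hmid1 i hlt hi2
          have := uniq i h1i j hjn' hjeq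
          exact hc ⟨by omega, by omega, by rw [hjeq, this]⟩
  have G2 : typeVec n φ' istar = 1 := by
    unfold typeVec
    rw [singl istar (le_refl _) h1, Finset.card_singleton]
  have G3 : ∀ i, istar < i → i < m → typeVec n φ' i = 1 := by
    intro i hi1 hi2
    unfold typeVec
    rw [singl i (le_of_lt hi1) hi2, Finset.card_singleton]
  have G4 : typeVec n φ' m = typeVec n φ m - 1 := by
    have hjmm := hjm m (by omega)
    have hset : (Finset.range n).filter (fun j => φ' j = m)
        = ((Finset.range n).filter (fun j => φ j = m)).erase (jmin m) := by
      ext j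
      simp only [Finset.mem_filter, Finset.mem_erase, Finset.mem_range]
      constructor
      · rintro ⟨hjn', hjeq⟩
        by_cases hc : istar < φ j ∧ φ j ≤ m ∧ j = jmin (φ j)
        · rw [hφ'j j hc] at hjeq; omega
        · rw [hφ'j2 j hc] at hjeq
          refine ⟨?_, hjn', hjeq⟩
          intro hjj
          exact hc ⟨by omega, by omega, by rw [hjeq, ← hjj]⟩
      · rintro ⟨hne, hjn', hjeq⟩
        have hc : ¬(istar < φ j ∧ φ j ≤ m ∧ j = jmin (φ j)) := by
          rintro ⟨-, -, hc3⟩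
          exact hne (by rw [hc3, hjeq])
        exact ⟨hjn', by rw [hφ'j2 j hc]; exact hjeq⟩
    unfold typeVec
    rw [hset, Finset.card_erase_of_mem]
    exact Finset.mem_filter.2 ⟨Finset.mem_range.2 hjmm.1, hjmm.2⟩
  -- memG
  have hmemG : memG n φ' := by
    intro I hI
    set J := I + 1 with hJ
    have hJn : J ≤ n := hI
    have hGs : ∑ i ∈ Finset.range istar, typeVec n φ i ≤ istar := by
      rcases Nat.eq_zero_or_pos istar with he | hp
      · simp [he]
      · have h := hG (istar - 1) (by omega)
        rwa [show istar - 1 + 1 = istar by omega] at h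
    rcases le_or_gt J istar with hc | hc
    · have : ∑ i ∈ Finset.range J, typeVec n φ' i = ∑ i ∈ Finset.range J, typeVec n φ i :=
        Finset.sum_congr rfl (fun i hi => G1 i (Or.inl (by
          have := Finset.mem_range.1 hi; omega)))
      rw [this]; exact hG I hI
    · rcases le_or_gt J m with hc2 | hc2
      · -- istar < J ≤ m
        have e1 : ∑ i ∈ Finset.range J, typeVec n φ' i
            = ∑ i ∈ Finset.range istar, typeVec n φ i + 1
              + ∑ i ∈ Finset.Ico (istar+1) J, typeVec n φ' i := by
          rw [sum_range_split (fun i => typeVec n φ' i) (show istar + 1 ≤ J by omega),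
              Finset.sum_range_succ, G2]
          have : ∑ i ∈ Finset.range istar, typeVec n φ' i
              = ∑ i ∈ Finset.range istar, typeVec n φ i :=
            Finset.sum_congr rfl (fun i hi => G1 i (Or.inl (Finset.mem_range.1 hi)))
          rw [this]
        have e2 : ∑ i ∈ Finset.Ico (istar+1) J, typeVec n φ' i = J - (istar + 1) := by
          rw [show ∑ i ∈ Finset.Ico (istar+1) J, typeVec n φ' i
              = ∑ i ∈ Finset.Ico (istar+1) J, 1 from
            Finset.sum_congr rfl (fun i hi => by
              have := Finset.mem_Ico.1 hi
              exact G3 i (by omega) (by omega))]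
          simp [Nat.card_Ico]
        rw [e1, e2]
        omega
      · -- m < J
        have e1 : ∑ i ∈ Finset.range J, typeVec n φ' i = ∑ i ∈ Finset.range J, typeVec n φ i := by
          rw [sum_range_split (fun i => typeVec n φ' i) (show m + 1 ≤ J by omega),
              sum_range_split (fun i => typeVec n φ i) (show m + 1 ≤ J by omega)]
          have gtail : ∑ i ∈ Finset.Ico (m+1) J, typeVec n φ' i
              = ∑ i ∈ Finset.Ico (m+1) J, typeVec n φ i :=
            Finset.sum_congr rfl (fun i hi => G1 i (Or.inr (Finset.mem_Ico.1 hi).1))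
          have g1 : ∑ i ∈ Finset.range istar, typeVec n φ' i
              = ∑ i ∈ Finset.range istar, typeVec n φ i :=
            Finset.sum_congr rfl (fun i hi => G1 i (Or.inl (Finset.mem_range.1 hi)))
          have g2 : ∑ i ∈ Finset.Ico (istar+1) m, typeVec n φ' i = m - (istar+1) := by
            rw [show ∑ i ∈ Finset.Ico (istar+1) m, typeVec n φ' i
                = ∑ i ∈ Finset.Ico (istar+1) m, 1 from
              Finset.sum_congr rfl (fun i hi => by
                have := Finset.mem_Ico.1 hi
                exact G3 i (by omega) (by omega))]
            simp [Nat.card_Ico]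
          have g2' : ∑ i ∈ Finset.Ico (istar+1) m, typeVec n φ i = m - (istar+1) := by
            rw [show ∑ i ∈ Finset.Ico (istar+1) m, typeVec n φ i
                = ∑ i ∈ Finset.Ico (istar+1) m, 1 from
              Finset.sum_congr rfl (fun i hi => by
                have := Finset.mem_Ico.1 hi
                exact hmid1 i (by omega) (by omega))]
            simp [Nat.card_Ico]
          have L : ∑ i ∈ Finset.range (m+1), typeVec n φ' i
              = ∑ i ∈ Finset.range istar, typeVec n φ i + 1 + (m - (istar+1))
                + (typeVec n φ m - 1) := by
            rw [Finset.sum_range_succ, G4,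
                sum_range_split (fun i => typeVec n φ' i) (show istar + 1 ≤ m by omega),
                Finset.sum_range_succ, G2, g1, g2]
          have R : ∑ i ∈ Finset.range (m+1), typeVec n φ i
              = ∑ i ∈ Finset.range istar, typeVec n φ i + (m - (istar+1))
                + typeVec n φ m := by
            rw [Finset.sum_range_succ,
                sum_range_split (fun i => typeVec n φ i) (show istar + 1 ≤ m by omega),
                Finset.sum_range_succ, h0, g2']
            omega
          omega
        rw [e1]; exact hG I hI
  -- IsRowContent
  have hrc : IsRowContent n φ' ib' := by
    refine ⟨hibn, ?_, ?_⟩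
    · rw [G1 ib' (Or.inr (by omega))]; exact hibz
    · intro i hi hz
      by_contra hgt
      push_neg at hgt
      rw [G1 i (Or.inr (by omega))] at hz
      exact absurd (hibmax i hi hz (by omega)) (by omega)
  have habove' : ∀ i, Ib < i → typeVec n φ' i ≤ 1 := by
    intro i hi
    rw [G1 i (Or.inr (by omega))]
    by_contra hgt
    exact absurd (hIbmax i (by omega)) (by omega)
  -- IsIb and gval
  obtain ⟨hB, hT, hR, hTb⟩ := realize n a hpos φ hφn moved ib' hibn
    (fun j _ hm => by
      have := (mvd j).1 hm
      exact ⟨by omega, by omega⟩)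
  by_cases hc : m < Ib ∨ 3 ≤ typeVec n φ m
  · -- A1 : Ib' = Ib
    have hIb2' : 2 ≤ typeVec n φ' Ib := by
      rcases eq_or_lt_of_le hmIb with he | hlt
      · rcases hc with hlt' | h3
        · omega
        · rw [← he, G4]; omega
      · rw [G1 Ib (Or.inr hlt)]; exact h2Ib
    have hIbIs : IsIb n φ' Ib := by
      left
      refine ⟨hIb2', ?_⟩
      intro i hi2
      by_contra hgt
      push_neg at hgt
      rw [G1 i (Or.inr (by omega))] at hi2
      exact absurd (hIbmax i hi2) (by omega)
    have hgval : gval n φ' Ib = K - 1 := by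
      unfold gval
      rw [show ((Finset.range Ib).filter fun i => typeVec n φ' i = 0)
          = ((Finset.range istar).filter fun i => typeVec n φ i = 0) from ?_]
      · exact hKcard
      · ext i
        simp only [Finset.mem_filter, Finset.mem_range]
        constructor
        · rintro ⟨hi, hz⟩
          rcases lt_or_ge i istar with hlt | hge
          · rw [G1 i (Or.inl hlt)] at hz; exact ⟨hlt, hz⟩
          · exfalso
            rcases eq_or_lt_of_le hge with he | hlt2
            · rw [← he, G2] at hz; omega
            · rcases lt_or_ge i m with him | him
              · rw [G3 i hlt2 him] at hz; omega
              · rcases eq_or_lt_of_le him with he2 | hlt3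
                · rw [← he2, G4] at hz
                  have : m < Ib := by omega
                  omega
                · rw [G1 i (Or.inr hlt3)] at hz
                  exact absurd (hmidIb i (by omega) hi) (by omega)
        · rintro ⟨hi, hz⟩
          rw [G1 i (Or.inl hi)]
          exact ⟨by omega, hz⟩
    exact ⟨_, φ', ib', Ib, hB, hT, hmemG, hrc, hIbIs, hgval, _, hR, hTb⟩
  · -- A2 : m = Ib and typeVec m = 2
    push_neg at hc
    have hmeq : m = Ib := by omega
    have ht2 : typeVec n φ m = 2 := by omega
    have hA2' := hA2 hmeq ht2
    have hup : ∀ i, istar ≤ i → typeVec n φ' i ≤ 1 := by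
      intro i hi
      rcases eq_or_lt_of_le hi with he | hlt
      · rw [← he, G2]
      · rcases lt_or_ge i m with him | him
        · rw [G3 i hlt him]
        · rcases eq_or_lt_of_le him with he2 | hlt3
          · rw [← he2, G4]; omega
          · rw [G1 i (Or.inr hlt3)]
            by_contra hgt
            exact absurd (hIbmax i (by omega)) (by omega)
    by_cases hP : ∃ i, i < istar ∧ 2 ≤ typeVec n φ i
    · obtain ⟨i0, hi0, h2i0⟩ := hP
      set R : Finset ℕ := (Finset.range istar).filter (fun i => 2 ≤ typeVec n φ i) with hR'
      have hRne : R.Nonempty := ⟨i0, Finset.mem_filter.2 ⟨Finset.mem_range.2 hi0, h2i0⟩⟩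
      set Ib' := R.max' hRne with hIb'def
      have hIb'mem := R.max'_mem hRne
      rw [Finset.mem_filter, Finset.mem_range] at hIb'mem
      obtain ⟨hIb'lt, hIb'2⟩ := hIb'mem
      have hRmax : ∀ i, i < istar → 2 ≤ typeVec n φ i → i ≤ Ib' := by
        intro i hi h2'
        exact Finset.le_max' R i (Finset.mem_filter.2 ⟨Finset.mem_range.2 hi, h2'⟩)
      have hIbIs : IsIb n φ' Ib' := by
        left
        constructor
        · rw [G1 Ib' (Or.inl hIb'lt)]; exact hIb'2
        · intro i hi2
          rcases lt_or_ge i istar with hlt | hge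
          · rw [G1 i (Or.inl hlt)] at hi2
            exact hRmax i hlt hi2
          · exact absurd (hup i hge) (by omega)
      have hgval : gval n φ' Ib' = K - 1 := by
        unfold gval
        rw [show ((Finset.range Ib').filter fun i => typeVec n φ' i = 0)
            = ((Finset.range istar).filter fun i => typeVec n φ i = 0) from ?_]
        · exact hKcard
        · ext i
          simp only [Finset.mem_filter, Finset.mem_range]
          constructor
          · rintro ⟨hi, hz⟩
            rw [G1 i (Or.inl (by omega))] at hz
            exact ⟨by omega, hz⟩
          · rintro ⟨hi, hz⟩
            obtain ⟨i1, hwi1, hi1s, h2i1⟩ := hA2' i hi hz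
            have := hRmax i1 hi1s h2i1
            rw [G1 i (Or.inl hi)]
            exact ⟨by omega, hz⟩
      exact ⟨_, φ', ib', Ib', hB, hT, hmemG, hrc, hIbIs, hgval, _, hR, hTb⟩
    · push_neg at hP
      have hmix : Mixed n φ' := by
        intro i hi
        rcases lt_or_ge i istar with hlt | hge
        · rw [G1 i (Or.inl hlt)]
          have := hP i hlt
          omega
        · exact hup i hge
      have hzero : ((Finset.range istar).filter fun i => typeVec n φ i = 0) = ∅ := by
        rw [Finset.filter_eq_empty_iff]
        intro w hw hwz
        obtain ⟨i1, -, hi1s, h2i1⟩ := hA2' w (Finset.mem_range.1 hw) hwz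
        exact absurd (hP i1 hi1s) (by omega)
      have hgval : gval n φ' 0 = K - 1 := by
        unfold gval
        rw [show K - 1 = 0 from by rw [← hKcard, hzero]; simp]
        simp
      exact ⟨_, φ', ib', 0, hB, hT, hmemG, hrc, Or.inr ⟨hmix, rfl⟩, hgval, _, hR, hTb⟩

theorem exists_predecessor_with_smaller_g
    (n : ℕ) (hn : 0 < n) (a : ℕ → ℕ → ℕ)
    (hpos : ∀ i ≤ n, ∀ j < n, 0 < a i j)
    (hord : ∀ j < n, ∀ i i' : ℕ, i ≤ i' → i' < n → a i j ≤ a i' j)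
    (b : ℕ → ℤ) (hb : memB n a b)
    (φ : ℕ → ℕ) (hφ : IsTypeFun n a b φ)
    (hG : memG n φ)
    (Ib : ℕ) (hIb : IsIb n φ Ib)
    (K : ℕ) (hK : 0 < K) (hg : gval n φ Ib = K) :
    ∃ (b' : ℕ → ℤ) (φ' : ℕ → ℕ) (ib' Ib' : ℕ),
      memB n a b' ∧ IsTypeFun n a b' φ' ∧ memG n φ' ∧
      IsRowContent n φ' ib' ∧ IsIb n φ' Ib' ∧ gval n φ' Ib' = K - 1 ∧
      ∃ bbar : ℕ → ℤ, memR n a b' φ' ib' bbar ∧ IsTypeFun n a bbar φ := by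
  have hφn : ∀ j < n, φ j ≤ n := fun j hj => (hφ j hj).1
  obtain ⟨h2, hIbmax⟩ : 2 ≤ typeVec n φ Ib ∧ ∀ i, 2 ≤ typeVec n φ i → i ≤ Ib := by
    rcases hIb with h | ⟨hmix, h0'⟩
    · exact h
    · exfalso
      rw [h0'] at hg
      unfold gval at hg
      simp at hg
      omega
  have hIbn : Ib ≤ n := by
    by_contra h
    push_neg at h
    rw [typeVec_eq_zero_of_gt hφn h] at h2
    omega
  have habove : ∀ i, Ib < i → typeVec n φ i ≤ 1 := by
    intro i hi
    by_contra hgt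
    exact absurd (hIbmax i (by omega)) (by omega)
  have hGpre : ∀ J, J ≤ n → ∑ i ∈ Finset.range J, typeVec n φ i ≤ J := by
    intro J hJ
    rcases Nat.eq_zero_or_pos J with he | hp
    · simp [he]
    · have h := hG (J - 1) (by omega)
      rwa [show J - 1 + 1 = J by omega] at h
  -- istar : largest zero below Ib
  have hKcard0 : ((Finset.range Ib).filter fun i => typeVec n φ i = 0).card = K := hg
  have hZbne : ((Finset.range Ib).filter fun i => typeVec n φ i = 0).Nonempty :=
    Finset.card_pos.1 (by omega)
  set istar := ((Finset.range Ib).filter fun i => typeVec n φ i = 0).max' hZbne with histar_def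
  have histar_mem := Finset.max'_mem _ hZbne
  rw [Finset.mem_filter, Finset.mem_range] at histar_mem
  obtain ⟨histarIb, h0⟩ := histar_mem
  have histarmax : ∀ i, i < Ib → typeVec n φ i = 0 → i ≤ istar := by
    intro i hi hz
    exact Finset.le_max' ((Finset.range Ib).filter fun i => typeVec n φ i = 0) i
      (Finset.mem_filter.2 ⟨Finset.mem_range.2 hi, hz⟩)
  have hKcard : ((Finset.range istar).filter fun i => typeVec n φ i = 0).card = K - 1 := by
    have hsplit : ((Finset.range Ib).filter fun i => typeVec n φ i = 0)
        = insert istar ((Finset.range istar).filter fun i => typeVec n φ i = 0) := by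
      ext i
      simp only [Finset.mem_filter, Finset.mem_range, Finset.mem_insert]
      constructor
      · rintro ⟨hi, hz⟩
        rcases eq_or_lt_of_le (histarmax i hi hz) with he | hlt
        · exact Or.inl he
        · exact Or.inr ⟨hlt, hz⟩
      · rintro (he | ⟨hi, hz⟩)
        · rw [he]; exact ⟨histarIb, h0⟩
        · exact ⟨by omega, hz⟩
    rw [hsplit, Finset.card_insert_of_notMem (by
      simp only [Finset.mem_filter, Finset.mem_range]
      rintro ⟨hlt, -⟩
      omega)] at hKcard0
    omega
  have hmidIb : ∀ i, istar < i → i < Ib → 1 ≤ typeVec n φ i := by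
    intro i hi1 hi2
    by_contra hz
    exact absurd (histarmax i hi2 (by omega)) (by omega)
  -- M : largest zero overall
  have hZallne : ((Finset.range (n+1)).filter fun i => typeVec n φ i = 0).Nonempty :=
    ⟨istar, Finset.mem_filter.2 ⟨Finset.mem_range.2 (by omega), h0⟩⟩
  set M := ((Finset.range (n+1)).filter fun i => typeVec n φ i = 0).max' hZallne with hM_def
  have hM_mem := Finset.max'_mem _ hZallne
  rw [Finset.mem_filter, Finset.mem_range] at hM_mem
  obtain ⟨hMn', hM0⟩ := hM_mem
  have hMn : M ≤ n := by omega
  have hMmax : ∀ i, i ≤ n → typeVec n φ i = 0 → i ≤ M := by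
    intro i hi hz
    exact Finset.le_max' ((Finset.range (n+1)).filter fun i => typeVec n φ i = 0) i
      (Finset.mem_filter.2 ⟨Finset.mem_range.2 (by omega), hz⟩)
  have hMne : M ≠ Ib := by
    intro h
    rw [← h] at h2
    rw [hM0] at h2
    exact absurd h2 (by omega)
  by_cases hcase : Ib < M
  · -- there is a zero above Ib
    have hS2ne : ((Finset.Ico (istar+1) (Ib+1)).filter fun i => 2 ≤ typeVec n φ i).Nonempty :=
      ⟨Ib, Finset.mem_filter.2 ⟨Finset.mem_Ico.2 ⟨by omega, by omega⟩, h2⟩⟩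
    set m := ((Finset.Ico (istar+1) (Ib+1)).filter fun i => 2 ≤ typeVec n φ i).min' hS2ne
      with hm_def
    have hm_mem := Finset.min'_mem _ hS2ne
    rw [Finset.mem_filter, Finset.mem_Ico] at hm_mem
    obtain ⟨⟨hm1, hm2'⟩, hm2⟩ := hm_mem
    have hmIb : m ≤ Ib := by omega
    have h1m : istar < m := by omega
    have hmmin : ∀ i, istar < i → i ≤ Ib → 2 ≤ typeVec n φ i → m ≤ i := by
      intro i hi1 hi2 h2'
      exact Finset.min'_le ((Finset.Ico (istar+1) (Ib+1)).filter fun i => 2 ≤ typeVec n φ i) i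
        (Finset.mem_filter.2 ⟨Finset.mem_Ico.2 ⟨by omega, by omega⟩, h2'⟩)
    have hmid1 : ∀ i, istar < i → i < m → typeVec n φ i = 1 := by
      intro i hi1 hi2
      have hge := hmidIb i hi1 (by omega)
      have : ¬ 2 ≤ typeVec n φ i := by
        intro h2'
        exact absurd (hmmin i hi1 (by omega) h2') (by omega)
      omega
    have hibmaxM : ∀ i, i ≤ n → typeVec n φ i = 0 → i ≠ istar → i ≤ M :=
      fun i hi hz _ => hMmax i hi hz
    by_cases hbad : m = Ib ∧ typeVec n φ Ib = 2 ∧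
        ∃ w, w < istar ∧ typeVec n φ w = 0 ∧ ∀ i, w < i → i < istar → typeVec n φ i = 1
    · -- bad case : full shift, ib' = M
      obtain ⟨hmeq, ht2, w, hw1, hw0, hwall⟩ := hbad
      have hmid1' : ∀ i, istar < i → i < Ib → typeVec n φ i = 1 := by
        intro i hi1 hi2
        exact hmid1 i hi1 (by omega)
      have hSm : ∀ J, istar < J → J ≤ Ib → J ≤ n →
          ∑ i ∈ Finset.range (J+1), typeVec n φ i ≤ J := by
        intro J hJ1 hJ2 hJn
        have ew : ∑ i ∈ Finset.range (w+1), typeVec n φ i ≤ w := by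
          rw [Finset.sum_range_succ, hw0]
          have := hGpre w (by omega)
          omega
        have emid : ∑ i ∈ Finset.Ico (w+1) istar, typeVec n φ i = istar - (w+1) := by
          rw [show ∑ i ∈ Finset.Ico (w+1) istar, typeVec n φ i
              = ∑ i ∈ Finset.Ico (w+1) istar, 1 from
            Finset.sum_congr rfl (fun i hi => by
              have := Finset.mem_Ico.1 hi
              exact hwall i (by omega) (by omega))]
          simp [Nat.card_Ico]
        have estar : ∑ i ∈ Finset.range (istar+1), typeVec n φ i ≤ istar - 1 := by
          have e1 : ∑ i ∈ Finset.Ico (w+1) (istar+1), typeVec n φ i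
              = ∑ i ∈ Finset.Ico (w+1) istar, typeVec n φ i
                + ∑ i ∈ Finset.Ico istar (istar+1), typeVec n φ i :=
            (Finset.sum_Ico_consecutive _ (by omega) (by omega)).symm
          rw [sum_range_split _ (show w + 1 ≤ istar + 1 by omega), e1, Nat.Ico_succ_singleton,
              Finset.sum_singleton, h0, emid]
          omega
        rcases eq_or_lt_of_le hJ2 with he | hlt
        · -- J = Ib
          subst he
          have emid2 : ∑ i ∈ Finset.Ico (istar+1) J, typeVec n φ i = J - (istar+1) := by
            rw [show ∑ i ∈ Finset.Ico (istar+1) J, typeVec n φ i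
                = ∑ i ∈ Finset.Ico (istar+1) J, 1 from
              Finset.sum_congr rfl (fun i hi => by
                have := Finset.mem_Ico.1 hi
                exact hmid1' i (by omega) (by omega))]
            simp [Nat.card_Ico]
          have e2 : ∑ i ∈ Finset.Ico (istar+1) (J+1), typeVec n φ i
              = ∑ i ∈ Finset.Ico (istar+1) J, typeVec n φ i
                + ∑ i ∈ Finset.Ico J (J+1), typeVec n φ i :=
            (Finset.sum_Ico_consecutive _ (by omega) (by omega)).symm
          rw [sum_range_split _ (show istar + 1 ≤ J + 1 by omega), e2, Nat.Ico_succ_singleton,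
              Finset.sum_singleton, emid2, ht2]
          omega
        · -- J < Ib
          have emid2 : ∑ i ∈ Finset.Ico (istar+1) (J+1), typeVec n φ i = J - istar := by
            rw [show ∑ i ∈ Finset.Ico (istar+1) (J+1), typeVec n φ i
                = ∑ i ∈ Finset.Ico (istar+1) (J+1), 1 from
              Finset.sum_congr rfl (fun i hi => by
                have := Finset.mem_Ico.1 hi
                exact hmid1' i (by omega) (by omega))]
            simp [Nat.card_Ico]
          rw [sum_range_split _ (show istar + 1 ≤ J + 1 by omega), emid2]
          omega
      exact moveB_works n a hpos φ hφn istar Ib M K histarIb hIbn h0 h2 hmidIb habove hG hSm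
        (le_of_lt hcase) hMn (Or.inr hM0) hibmaxM hKcard
    · -- not bad : cascade, ib' = M
      have hA2 : m = Ib → typeVec n φ m = 2 →
          ∀ w, w < istar → typeVec n φ w = 0 →
            ∃ i, w < i ∧ i < istar ∧ 2 ≤ typeVec n φ i := by
        intro hmeq ht2
        have hnex : ∀ w, w < istar → typeVec n φ w = 0 →
            ∃ i, w < i ∧ i < istar ∧ typeVec n φ i ≠ 1 := by
          intro w hw hw0
          by_contra hall
          push_neg at hall
          exact hbad ⟨hmeq, by rw [← hmeq]; exact ht2, w, hw, hw0, fun i h1' h2' => hall i h1' h2'⟩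
        have claim : ∀ d w, istar - w ≤ d → w < istar → typeVec n φ w = 0 →
            ∃ i, w < i ∧ i < istar ∧ 2 ≤ typeVec n φ i := by
          intro d
          induction d with
          | zero => intro w hd hw _; omega
          | succ d ih =>
            intro w hd hw hw0
            obtain ⟨i, hwi, his, hne⟩ := hnex w hw hw0
            by_cases h2i : 2 ≤ typeVec n φ i
            · exact ⟨i, hwi, his, h2i⟩
            · obtain ⟨i', h1', h2', h3'⟩ := ih i (by omega) his (by omega)
              exact ⟨i', by omega, h2', h3'⟩
        intro w hw hw0
        exact claim (istar - w) w (le_refl _) hw hw0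
      exact moveA_works n a hpos φ hφn istar m Ib M K h1m hmIb hIbn h0 hm2 h2 hmid1 hmidIb
        hIbmax hG hcase hMn hM0 hibmaxM hKcard hA2
  · -- no zero above Ib : full shift with ib' = Ib
    have hMlt : M < Ib := lt_of_le_of_ne (not_lt.1 hcase) hMne
    have hsum : ∑ i ∈ Finset.range (n+1), typeVec n φ i = n := sum_typeVec hφn
    have hSm : ∀ J, istar < J → J ≤ Ib → J ≤ n →
        ∑ i ∈ Finset.range (J+1), typeVec n φ i ≤ J := by
      intro J hJ1 hJ2 hJn
      have hpos1 : ∀ i, J < i → i < n + 1 → 1 ≤ typeVec n φ i := by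
        intro i hi1 hi2
        by_contra hz
        have hz0 : typeVec n φ i = 0 := by omega
        have := hMmax i (by omega) hz0
        have : i < Ib := by omega
        exact absurd (histarmax i this hz0) (by omega)
      have hsplit : ∑ i ∈ Finset.range (J+1), typeVec n φ i
          + ∑ i ∈ Finset.Ico (J+1) (n+1), typeVec n φ i = n := by
        rw [← sum_range_split (fun i => typeVec n φ i) (show J + 1 ≤ n + 1 by omega)]
        exact hsum
      rcases eq_or_lt_of_le hJ2 with he | hlt
      · have htail : n - J ≤ ∑ i ∈ Finset.Ico (J+1) (n+1), typeVec n φ i := by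
          calc n - J = ∑ i ∈ Finset.Ico (J+1) (n+1), 1 := by
                rw [Finset.sum_const, smul_eq_mul, mul_one, Nat.card_Ico]; omega
          _ ≤ _ := Finset.sum_le_sum (fun i hi => by
              have := Finset.mem_Ico.1 hi
              exact hpos1 i (by omega) (by omega))
        omega
      · have hIbmem : Ib ∈ Finset.Ico (J+1) (n+1) := Finset.mem_Ico.2 ⟨by omega, by omega⟩
        have hsplit2 : typeVec n φ Ib + ∑ i ∈ (Finset.Ico (J+1) (n+1)).erase Ib, typeVec n φ i
            = ∑ i ∈ Finset.Ico (J+1) (n+1), typeVec n φ i :=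
          Finset.add_sum_erase _ _ hIbmem
        have htail : n - J - 1 ≤ ∑ i ∈ (Finset.Ico (J+1) (n+1)).erase Ib, typeVec n φ i := by
          calc n - J - 1 = ∑ i ∈ (Finset.Ico (J+1) (n+1)).erase Ib, 1 := by
                simp [Finset.card_erase_of_mem hIbmem, Nat.card_Ico]
          _ ≤ _ := Finset.sum_le_sum (fun i hi => by
              have hi2 := Finset.mem_Ico.1 (Finset.mem_of_mem_erase hi)
              exact hpos1 i (by omega) (by omega))
        omega
    have hibmaxIb : ∀ i, i ≤ n → typeVec n φ i = 0 → i ≠ istar → i ≤ Ib := by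
      intro i hi hz _
      have := hMmax i hi hz
      omega
    exact moveB_works n a hpos φ hφn istar Ib Ib K histarIb hIbn h0 h2 hmidIb habove hG hSm
      (le_refl Ib) hIbn (Or.inl rfl) hibmaxIb hKcard
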